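/- In the branching gadget under the sequential update model starting from r_u = r_v = 1, both banks are initially updatable; if u updates first the process stabilizes after exactly one step at (r_u, r_v) = (0,1), and if v updates first it stabilizes after exactly one step at (1,0). In particular, the equilibrium (1/2, 1/2) is not reachable by any sequence of sequential updates from the initial state. -/
import Mathlib


namespace Branch

/-- Asset of bank `u` (index `true`) resp. `v` (index `false`) in the branching gadget. -/
def asset (w : Bool) (r : ℝ × ℝ) : ℝ := if w then 1 - r.2 else 1 - r.1

/-- Bank `w` is updatable at state `r` iff its rate differs from `min(1, a_w(r))`. -/
def updatable (w : Bool) (r : ℝ × ℝ) : Prop :=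
  (if w then r.1 else r.2) ≠ min 1 (asset w r)

/-- Updating bank `w`. -/
noncomputable def upd (w : Bool) (r : ℝ × ℝ) : ℝ × ℝ :=
  if w then (min 1 (asset w r), r.2) else (r.1, min 1 (asset w r))

/-- States reachable from `(1,1)` by sequential updates of updatable banks. -/
inductive Reachable : ℝ × ℝ → Prop
  | init : Reachable (1, 1)
  | step (r : ℝ × ℝ) (w : Bool) : Reachable r → updatable w r → Reachable (upd w r)

lemma invariant {r : ℝ × ℝ} (h : Reachable r) :
    r = (1, 1) ∨ r = (0, 1) ∨ r = (1, 0) := by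
  induction h with
  | init => exact Or.inl rfl
  | step r w _ hu ih =>
    rcases ih with h | h | h <;> subst h <;> cases w <;>
      simp_all [updatable, upd, asset]

end Branch

/-- in the branching gadget starting from `(1,1)`, both banks are updatable;
if `u` updates first the process stabilizes after one step at `(0,1)`, if `v` updates first
it stabilizes after one step at `(1,0)`; and the equilibrium `(1/2,1/2)` is not reachable. -/
theorem stmt6 :
    Branch.updatable true (1, 1) ∧ Branch.updatable false (1, 1) ∧
    Branch.upd true (1, 1) = ((0:ℝ), (1:ℝ)) ∧
    (∀ w, ¬ Branch.updatable w ((0:ℝ), (1:ℝ))) ∧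
    Branch.upd false (1, 1) = ((1:ℝ), (0:ℝ)) ∧
    (∀ w, ¬ Branch.updatable w ((1:ℝ), (0:ℝ))) ∧
    ¬ Branch.Reachable ((1/2 : ℝ), (1/2 : ℝ)) := by
  refine ⟨?_, ?_, ?_, ?_, ?_, ?_, ?_⟩
  · simp [Branch.updatable, Branch.asset]
  · simp [Branch.updatable, Branch.asset]
  · simp [Branch.upd, Branch.asset]
  · intro w; cases w <;> simp [Branch.updatable, Branch.asset]
  · simp [Branch.upd, Branch.asset]
  · intro w; cases w <;> simp [Branch.updatable, Branch.asset]
  · intro h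
    rcases Branch.invariant h with h | h | h <;>
      simp_all [Prod.ext_iff]
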